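/- arXiv:1811.01652 — 2 statements merged into one kernel-verified Lean document; each statement's English description precedes it below -/
import Mathlib

section
/- A nontrivial real Banach space X is B-convex if and only if there exists an integer n ≥ 2 such that C̄_mNJ^{(n)}(X) < n. -/
open Finset MeasureTheory

noncomputable def njRatio {X : Type*} [NormedAddCommGroup X] [NormedSpace ℝ X]
    {m : ℕ} (x0 : X) (y : Fin m → X) : ℝ :=
  (∑ ε : Fin m → Bool, ‖x0 + ∑ j, (if ε j then (1 : ℝ) else -1) • y j‖ ^ 2) /
    (2 ^ m * (‖x0‖ ^ 2 + ∑ j, ‖y j‖ ^ 2))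

noncomputable def upperNJ (X : Type*) [NormedAddCommGroup X] [NormedSpace ℝ X] (n : ℕ) : ℝ :=
  sSup {c : ℝ | ∃ (x0 : X) (y : Fin (n - 1) → X),
    0 < ‖x0‖ ^ 2 + ∑ j, ‖y j‖ ^ 2 ∧ c = njRatio x0 y}

noncomputable def lowerNJ (X : Type*) [NormedAddCommGroup X] [NormedSpace ℝ X] (n : ℕ) : ℝ :=
  sInf {c : ℝ | ∃ (x0 : X) (y : Fin (n - 1) → X),
    0 < ‖x0‖ ^ 2 + ∑ j, ‖y j‖ ^ 2 ∧ c = njRatio x0 y}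

noncomputable def upperMNJ (X : Type*) [NormedAddCommGroup X] [NormedSpace ℝ X] (n : ℕ) : ℝ :=
  sSup {c : ℝ | ∃ (x0 : X) (y : Fin (n - 1) → X),
    ‖x0‖ = 1 ∧ (∀ j, ‖y j‖ = 1) ∧ c = njRatio x0 y}

noncomputable def lowerMNJ (X : Type*) [NormedAddCommGroup X] [NormedSpace ℝ X] (n : ℕ) : ℝ :=
  sInf {c : ℝ | ∃ (x0 : X) (y : Fin (n - 1) → X),
    ‖x0‖ = 1 ∧ (∀ j, ‖y j‖ = 1) ∧ c = njRatio x0 y}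

/-- A Banach space is uniformly non-`l_n^1` if there is `δ > 0` such that for all
`x_1, …, x_n` in the closed unit ball, some choice of signs gives
`‖x_1 ± x_2 ± ⋯ ± x_n‖ ≤ n (1 - δ)`. -/
def UniformlyNonL1 (X : Type*) [NormedAddCommGroup X] [NormedSpace ℝ X] (n : ℕ) : Prop :=
  ∃ δ : ℝ, 0 < δ ∧ ∀ (x0 : X) (y : Fin (n - 1) → X), ‖x0‖ ≤ 1 → (∀ j, ‖y j‖ ≤ 1) →
    ∃ ε : Fin (n - 1) → Bool,
      ‖x0 + ∑ j, (if ε j then (1 : ℝ) else -1) • y j‖ ≤ n * (1 - δ)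

/-- A Banach space is B-convex if it is uniformly non-l_n^1 for some integer n ≥ 2. -/
def BConvex (X : Type*) [NormedAddCommGroup X] [NormedSpace ℝ X] : Prop :=
  ∃ n : ℕ, 2 ≤ n ∧ UniformlyNonL1 X n

section Helpers
variable {X : Type*} [NormedAddCommGroup X] [NormedSpace ℝ X]

lemma sign_smul_norm (b : Bool) (v : X) : ‖(if b then (1:ℝ) else -1) • v‖ = ‖v‖ := by
  rcases b <;> simp [norm_smul]

lemma term_le {m : ℕ} (x0 : X) (y : Fin m → X) (hx : ‖x0‖ ≤ 1) (hy : ∀ j, ‖y j‖ ≤ 1)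
    (ε : Fin m → Bool) :
    ‖x0 + ∑ j, (if ε j then (1:ℝ) else -1) • y j‖ ≤ (m : ℝ) + 1 := by
  calc ‖x0 + ∑ j, (if ε j then (1:ℝ) else -1) • y j‖
      ≤ ‖x0‖ + ∑ j, ‖(if ε j then (1:ℝ) else -1) • y j‖ :=
        (norm_add_le _ _).trans (by gcongr; exact norm_sum_le _ _)
    _ ≤ 1 + ∑ j : Fin m, (1:ℝ) :=
        add_le_add hx (Finset.sum_le_sum fun j _ => by rw [sign_smul_norm]; exact hy j)
    _ = (m : ℝ) + 1 := by simp [add_comm]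

lemma njRatio_unit_eq {m : ℕ} (x0 : X) (y : Fin m → X) (hx : ‖x0‖ = 1)
    (hy : ∀ j, ‖y j‖ = 1) :
    njRatio x0 y = (∑ ε : Fin m → Bool,
      ‖x0 + ∑ j, (if ε j then (1:ℝ) else -1) • y j‖ ^ 2) / (2 ^ m * ((m : ℝ) + 1)) := by
  unfold njRatio
  rw [hx]
  simp [hy, add_comm]

lemma njRatio_unit_le {m : ℕ} (x0 : X) (y : Fin m → X) (hx : ‖x0‖ = 1)
    (hy : ∀ j, ‖y j‖ = 1) : njRatio x0 y ≤ (m : ℝ) + 1 := by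
  rw [njRatio_unit_eq x0 y hx hy]
  have hD : (0:ℝ) < 2 ^ m * ((m : ℝ) + 1) := by positivity
  rw [div_le_iff₀ hD]
  calc (∑ ε : Fin m → Bool, ‖x0 + ∑ j, (if ε j then (1:ℝ) else -1) • y j‖ ^ 2)
      ≤ ∑ _ε : Fin m → Bool, ((m : ℝ) + 1) ^ 2 := by
        refine Finset.sum_le_sum fun ε _ => ?_
        exact pow_le_pow_left₀ (norm_nonneg _) (term_le x0 y hx.le (fun j => (hy j).le) ε) 2
    _ = 2 ^ m * ((m : ℝ) + 1) ^ 2 := by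
        rw [Finset.sum_const, Finset.card_univ]
        simp [Fintype.card_fun]
    _ = ((m : ℝ) + 1) * (2 ^ m * ((m : ℝ) + 1)) := by ring

lemma norm_normalize_sub (x : X) (h0 : 0 < ‖x‖) (h1 : ‖x‖ ≤ 1) :
    ‖‖x‖⁻¹ • x - x‖ = 1 - ‖x‖ := by
  have h : ‖x‖⁻¹ • x - x = (‖x‖⁻¹ - 1) • x := by rw [sub_smul, one_smul]
  have hinv : (1:ℝ) ≤ ‖x‖⁻¹ := (one_le_inv₀ h0).mpr h1
  rw [h, norm_smul, Real.norm_eq_abs, abs_of_nonneg (by linarith)]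
  field_simp

end Helpers

set_option maxHeartbeats 2000000 in
theorem stmt_15 (X : Type*) [NormedAddCommGroup X] [NormedSpace ℝ X] [CompleteSpace X]
    [Nontrivial X] :
    BConvex X ↔ ∃ n : ℕ, 2 ≤ n ∧ upperMNJ X n < n := by
  constructor
  · -- forward: B-convex ⇒ upperMNJ < n
    rintro ⟨n, hn2, δ0, hδ0, hU⟩
    refine ⟨n, hn2, ?_⟩
    set m := n - 1 with hm
    have hmn : ((m : ℝ) + 1) = (n : ℝ) := by
      have h := Nat.sub_add_cancel (by omega : 1 ≤ n)
      exact_mod_cast congrArg (Nat.cast : ℕ → ℝ) h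
    have hnpos : (0:ℝ) < n := by
      have : (2:ℝ) ≤ (n:ℝ) := by exact_mod_cast hn2
      linarith
    set δ : ℝ := min δ0 1 with hδdef
    have hδpos : 0 < δ := lt_min hδ0 one_pos
    have hδ1 : δ ≤ 1 := min_le_right _ _
    have h2m : (1:ℝ) ≤ 2 ^ m := one_le_pow₀ (by norm_num)
    have h2mpos : (0:ℝ) < 2 ^ m := by positivity
    have hbound : upperMNJ X n ≤ (n : ℝ) - (n : ℝ) * δ / 2 ^ m := by
      apply Real.sSup_le
      · rintro c ⟨x0, y, hx, hy, rfl⟩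
        obtain ⟨ε0, hε0⟩ := hU x0 y hx.le (fun j => (hy j).le)
        have hterm0 : ‖x0 + ∑ j, (if ε0 j then (1:ℝ) else -1) • y j‖ ≤ (n : ℝ) * (1 - δ) := by
          refine hε0.trans ?_
          have : δ ≤ δ0 := min_le_left _ _
          nlinarith
        rw [njRatio_unit_eq x0 y hx hy, hmn]
        have hD : (0:ℝ) < 2 ^ m * (n : ℝ) := by positivity
        rw [div_le_iff₀ hD]
        have hsplit := Finset.add_sum_erase Finset.univ
          (fun ε : Fin m → Bool => ‖x0 + ∑ j, (if ε j then (1:ℝ) else -1) • y j‖ ^ 2)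
          (Finset.mem_univ ε0)
        have hcardN : (Finset.univ.erase ε0).card = 2 ^ m - 1 := by
          rw [Finset.card_erase_of_mem (Finset.mem_univ _), Finset.card_univ]
          simp [Fintype.card_fun]
        have hcard : ((Finset.univ.erase ε0).card : ℝ) = 2 ^ m - 1 := by
          rw [hcardN, Nat.cast_sub (Nat.one_le_pow m 2 (by norm_num))]
          simp
        have hrest : ∑ ε ∈ Finset.univ.erase ε0,
            ‖x0 + ∑ j, (if ε j then (1:ℝ) else -1) • y j‖ ^ 2 ≤ (2 ^ m - 1) * (n : ℝ) ^ 2 := by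
          calc ∑ ε ∈ Finset.univ.erase ε0,
              ‖x0 + ∑ j, (if ε j then (1:ℝ) else -1) • y j‖ ^ 2
              ≤ ∑ _ε ∈ Finset.univ.erase ε0, (n : ℝ) ^ 2 := by
                refine Finset.sum_le_sum fun ε _ => ?_
                refine pow_le_pow_left₀ (norm_nonneg _) ?_ 2
                rw [← hmn]
                exact term_le x0 y hx.le (fun j => (hy j).le) ε
            _ = (2 ^ m - 1) * (n : ℝ) ^ 2 := by rw [Finset.sum_const, nsmul_eq_mul, hcard]
        have hterm0sq : ‖x0 + ∑ j, (if ε0 j then (1:ℝ) else -1) • y j‖ ^ 2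
            ≤ ((n : ℝ) * (1 - δ)) ^ 2 :=
          pow_le_pow_left₀ (norm_nonneg _) hterm0 2
        have hS : ∑ ε : Fin m → Bool, ‖x0 + ∑ j, (if ε j then (1:ℝ) else -1) • y j‖ ^ 2
            ≤ ((n : ℝ) * (1 - δ)) ^ 2 + (2 ^ m - 1) * (n : ℝ) ^ 2 := by
          rw [← hsplit]; exact add_le_add hterm0sq hrest
        refine hS.trans ?_
        have hr : ((n : ℝ) - (n:ℝ) * δ / 2 ^ m) * (2 ^ m * (n:ℝ))
            = 2 ^ m * (n:ℝ) ^ 2 - (n:ℝ) ^ 2 * δ := by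
          field_simp
        rw [hr]
        have hδδ : δ ^ 2 ≤ δ := by nlinarith
        nlinarith [mul_le_mul_of_nonneg_left hδδ (sq_nonneg (n:ℝ))]
      · have h1 : (n:ℝ) * δ / 2 ^ m ≤ (n:ℝ) * 1 / 1 :=
          div_le_div₀ (by positivity) (by nlinarith) one_pos h2m
        nlinarith
    have : (0:ℝ) < (n : ℝ) * δ / 2 ^ m := by positivity
    linarith
  · -- backward: upperMNJ < n ⇒ B-convex
    rintro ⟨n, hn2, hlt⟩
    set m := n - 1 with hm
    have hmn : ((m : ℝ) + 1) = (n : ℝ) := by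
      have h := Nat.sub_add_cancel (by omega : 1 ≤ n)
      exact_mod_cast congrArg (Nat.cast : ℕ → ℝ) h
    have hnR : (2:ℝ) ≤ (n : ℝ) := by exact_mod_cast hn2
    have hnpos : (0:ℝ) < n := by linarith
    set s := upperMNJ X n with hs
    set S : Set ℝ := {c : ℝ | ∃ (x0 : X) (y : Fin (n - 1) → X),
      ‖x0‖ = 1 ∧ (∀ j, ‖y j‖ = 1) ∧ c = njRatio x0 y} with hSdef
    have hsSup : s = sSup S := rfl
    have hbdd : BddAbove S := by
      refine ⟨(n : ℝ), ?_⟩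
      rintro c ⟨x0, y, hx, hy, rfl⟩
      rw [← hmn]
      exact njRatio_unit_le x0 y hx hy
    set δ : ℝ := min (((n:ℝ) - s) / (2 * n * (n + 1))) (1 / (2 * (n + 1))) with hδdef
    have hδpos : 0 < δ := by
      apply lt_min
      · exact div_pos (by linarith) (by positivity)
      · positivity
    have hδ2 : 2 * (n:ℝ) * (n + 1) * δ ≤ (n:ℝ) - s := by
      have h := min_le_left (((n:ℝ) - s) / (2 * n * (n + 1))) (1 / (2 * (n + 1)))
      rw [le_div_iff₀ (by positivity : (0:ℝ) < 2 * (n:ℝ) * (n + 1))] at h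
      linarith [h]
    have hδ1 : ((n:ℝ) + 1) * δ ≤ 1 / 2 := by
      have h := min_le_right (((n:ℝ) - s) / (2 * n * (n + 1))) (1 / (2 * (n + 1)))
      have h2 : ((n:ℝ) + 1) * δ ≤ ((n:ℝ) + 1) * (1 / (2 * (n + 1))) :=
        mul_le_mul_of_nonneg_left h (by positivity)
      have hne : ((n:ℝ) + 1) ≠ 0 := by positivity
      have heq : ((n:ℝ) + 1) * (1 / (2 * ((n:ℝ) + 1))) = 1 / 2 := by
        field_simp
      rw [heq] at h2
      exact h2
    refine ⟨n, hn2, δ, hδpos, fun x0 y hx hy => ?_⟩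
    by_contra hcon
    push_neg at hcon
    have hnδ : (n:ℝ) * δ < 1 / 2 := by nlinarith
    have hx0big : 1 - (n:ℝ) * δ < ‖x0‖ := by
      have h1 := hcon (fun _ => true)
      have h2 : ‖x0 + ∑ j, (if (true:Bool) then (1:ℝ) else -1) • y j‖ ≤ ‖x0‖ + (m:ℝ) := by
        refine (norm_add_le _ _).trans ?_
        have h3 : ‖∑ j, (if (true:Bool) then (1:ℝ) else -1) • y j‖ ≤ (m:ℝ) := by
          refine (norm_sum_le _ _).trans ?_
          calc ∑ j, ‖(if (true:Bool) then (1:ℝ) else -1) • y j‖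
              ≤ ∑ _j : Fin m, (1:ℝ) :=
                Finset.sum_le_sum fun j _ => by rw [sign_smul_norm]; exact hy j
            _ = (m:ℝ) := by simp
        linarith
      have h6 := lt_of_lt_of_le h1 h2
      have h7 : (n:ℝ) * (1 - δ) = (n:ℝ) - (n:ℝ) * δ := by ring
      linarith [hmn]
    have hybig : ∀ j, 1 - (n:ℝ) * δ < ‖y j‖ := by
      intro j
      have h1 := hcon (fun _ => true)
      have h2 : ‖x0 + ∑ k, (if (true:Bool) then (1:ℝ) else -1) • y k‖
          ≤ 1 + (((m:ℝ) - 1) + ‖y j‖) := by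
        refine (norm_add_le _ _).trans (add_le_add hx ?_)
        refine (norm_sum_le _ _).trans ?_
        have hsplit := Finset.add_sum_erase Finset.univ
          (fun k : Fin m => ‖(if (true:Bool) then (1:ℝ) else -1) • y k‖) (Finset.mem_univ j)
        rw [← hsplit]
        have hcardN : (Finset.univ.erase j).card = m - 1 := by
          rw [Finset.card_erase_of_mem (Finset.mem_univ _), Finset.card_univ, Fintype.card_fin]
        have hcard : ((Finset.univ.erase j).card : ℝ) = (m:ℝ) - 1 := by
          rw [hcardN, Nat.cast_sub (by omega : 1 ≤ m)]
          simp
        have h4 : ∑ k ∈ Finset.univ.erase j, ‖(if (true:Bool) then (1:ℝ) else -1) • y k‖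
            ≤ (m:ℝ) - 1 := by
          calc ∑ k ∈ Finset.univ.erase j, ‖(if (true:Bool) then (1:ℝ) else -1) • y k‖
              ≤ ∑ _k ∈ Finset.univ.erase j, (1:ℝ) :=
                Finset.sum_le_sum fun k _ => by rw [sign_smul_norm]; exact hy k
            _ = (m:ℝ) - 1 := by rw [Finset.sum_const, nsmul_eq_mul, hcard, mul_one]
        have h5 : ‖(if (true:Bool) then (1:ℝ) else -1) • y j‖ = ‖y j‖ := sign_smul_norm _ _
        beta_reduce
        rw [h5]
        linarith
      have h6 := lt_of_lt_of_le h1 h2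
      have h7 : (n:ℝ) * (1 - δ) = (n:ℝ) - (n:ℝ) * δ := by ring
      linarith [hmn]
    have hx0pos : 0 < ‖x0‖ := by linarith [hx0big, hnδ]
    have hypos : ∀ j, 0 < ‖y j‖ := fun j => by linarith [hybig j, hnδ]
    set u0 : X := ‖x0‖⁻¹ • x0 with hu0
    set v : Fin m → X := fun j => ‖y j‖⁻¹ • y j with hv
    have hu0norm : ‖u0‖ = 1 := by
      rw [hu0, norm_smul, Real.norm_eq_abs, abs_of_pos (inv_pos.mpr hx0pos),
        inv_mul_cancel₀ hx0pos.ne']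
    have hvnorm : ∀ j, ‖v j‖ = 1 := fun j => by
      rw [hv, norm_smul, Real.norm_eq_abs, abs_of_pos (inv_pos.mpr (hypos j)),
        inv_mul_cancel₀ (hypos j).ne']
    have hdiff : ∀ ε : Fin m → Bool,
        ‖(u0 + ∑ j, (if ε j then (1:ℝ) else -1) • v j)
          - (x0 + ∑ j, (if ε j then (1:ℝ) else -1) • y j)‖ ≤ (n:ℝ) * ((n:ℝ) * δ) := by
      intro ε
      have heq : (u0 + ∑ j, (if ε j then (1:ℝ) else -1) • v j)
          - (x0 + ∑ j, (if ε j then (1:ℝ) else -1) • y j)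
          = (u0 - x0) + ∑ j, (if ε j then (1:ℝ) else -1) • (v j - y j) := by
        have h1 : ∑ j, (if ε j then (1:ℝ) else -1) • (v j - y j)
            = ∑ j, (if ε j then (1:ℝ) else -1) • v j
              - ∑ j, (if ε j then (1:ℝ) else -1) • y j := by
          rw [← Finset.sum_sub_distrib]
          exact Finset.sum_congr rfl fun j _ => smul_sub _ _ _
        rw [h1]; abel
      rw [heq]
      have hux : ‖u0 - x0‖ ≤ (n:ℝ) * δ := by
        rw [hu0, norm_normalize_sub x0 hx0pos hx]
        linarith [hx0big]
      calc ‖(u0 - x0) + ∑ j, (if ε j then (1:ℝ) else -1) • (v j - y j)‖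
          ≤ ‖u0 - x0‖ + ∑ j, ‖(if ε j then (1:ℝ) else -1) • (v j - y j)‖ :=
            (norm_add_le _ _).trans (by gcongr; exact norm_sum_le _ _)
        _ ≤ (n:ℝ) * δ + ∑ _j : Fin m, (n:ℝ) * δ := by
            refine add_le_add hux (Finset.sum_le_sum fun j _ => ?_)
            rw [sign_smul_norm, hv]
            simp only
            rw [norm_normalize_sub (y j) (hypos j) (hy j)]
            linarith [hybig j]
        _ = ((m:ℝ) + 1) * ((n:ℝ) * δ) := by
            rw [Finset.sum_const, Finset.card_univ, Fintype.card_fin, nsmul_eq_mul]; ring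
        _ = (n:ℝ) * ((n:ℝ) * δ) := by rw [hmn]
    set t : ℝ := (n:ℝ) * (1 - ((n:ℝ) + 1) * δ) with ht
    have ht0 : 0 ≤ t := by nlinarith
    have hbig : ∀ ε : Fin m → Bool,
        t < ‖u0 + ∑ j, (if ε j then (1:ℝ) else -1) • v j‖ := by
      intro ε
      have h1 := hcon ε
      have h2 := hdiff ε
      have h3 : ‖x0 + ∑ j, (if ε j then (1:ℝ) else -1) • y j‖
          - ‖u0 + ∑ j, (if ε j then (1:ℝ) else -1) • v j‖
          ≤ ‖(u0 + ∑ j, (if ε j then (1:ℝ) else -1) • v j)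
            - (x0 + ∑ j, (if ε j then (1:ℝ) else -1) • y j)‖ := by
        rw [norm_sub_rev]
        exact norm_sub_norm_le _ _
      rw [ht]
      nlinarith
    have hsum : (2:ℝ) ^ m * t ^ 2
        < ∑ ε : Fin m → Bool, ‖u0 + ∑ j, (if ε j then (1:ℝ) else -1) • v j‖ ^ 2 := by
      have h := Finset.sum_lt_sum_of_nonempty (Finset.univ_nonempty)
        (fun ε (_ : ε ∈ (Finset.univ : Finset (Fin m → Bool))) =>
          pow_lt_pow_left₀ (hbig ε) ht0 (by norm_num : (2:ℕ) ≠ 0))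
      rw [Finset.sum_const, Finset.card_univ] at h
      simpa [Fintype.card_fun, nsmul_eq_mul] using h
    have hmem : njRatio u0 v ∈ S := ⟨u0, v, hu0norm, hvnorm, rfl⟩
    have hle : njRatio u0 v ≤ s := by rw [hsSup]; exact le_csSup hbdd hmem
    have hgt : s < njRatio u0 v := by
      rw [njRatio_unit_eq u0 v hu0norm hvnorm, hmn]
      rw [lt_div_iff₀ (by positivity : (0:ℝ) < 2 ^ m * (n:ℝ))]
      have hts : (n:ℝ) * s ≤ t ^ 2 := by
        rw [ht]
        nlinarith [sq_nonneg ((n:ℝ) * (((n:ℝ) + 1) * δ)),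
          mul_le_mul_of_nonneg_left hδ2 hnpos.le]
      calc s * (2 ^ m * (n:ℝ)) = 2 ^ m * ((n:ℝ) * s) := by ring
        _ ≤ 2 ^ m * t ^ 2 := mul_le_mul_of_nonneg_left hts (by positivity)
        _ < _ := hsum
    linarith
end

section
/- Let X be a nontrivial real Banach space and n ≥ 2 an integer. Then C̄_mNJ^{(n)}(X) = n if and only if C̄_NJ^{(n)}(X) = n; equivalently, C̄_mNJ^{(n)}(X) < n if and only if C̄_NJ^{(n)}(X) < n. -/
open Finset MeasureTheory

section Helpers

set_option linter.unusedSectionVars false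

variable {X : Type*} [NormedAddCommGroup X] [NormedSpace ℝ X] {m : ℕ}

lemma njTerm_le (x0 : X) (y : Fin m → X) (ε : Fin m → Bool) :
    ‖x0 + ∑ j, (if ε j then (1 : ℝ) else -1) • y j‖ ≤ ‖x0‖ + ∑ j, ‖y j‖ := by
  refine (norm_add_le _ _).trans ?_
  gcongr
  refine (norm_sum_le _ _).trans_eq (Finset.sum_congr rfl fun j _ => ?_)
  rw [norm_smul]
  split <;> simp

lemma cs_ineq (x0 : X) (y : Fin m → X) :
    (‖x0‖ + ∑ j, ‖y j‖) ^ 2 ≤ ((m : ℝ) + 1) * (‖x0‖ ^ 2 + ∑ j, ‖y j‖ ^ 2) := by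
  have h := sq_sum_le_card_mul_sum_sq (s := (univ : Finset (Fin (m+1))))
    (f := Fin.cons ‖x0‖ fun j => ‖y j‖)
  simp only [Fin.sum_univ_succ, Fin.cons_zero, Fin.cons_succ, card_univ, Fintype.card_fin] at h
  push_cast at h
  convert h using 2

lemma sum_sq_le (x0 : X) (y : Fin m → X) :
    (∑ ε : Fin m → Bool, ‖x0 + ∑ j, (if ε j then (1 : ℝ) else -1) • y j‖ ^ 2)
      ≤ 2 ^ m * (‖x0‖ + ∑ j, ‖y j‖) ^ 2 := by
  calc (∑ ε : Fin m → Bool, ‖x0 + ∑ j, (if ε j then (1 : ℝ) else -1) • y j‖ ^ 2)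
      ≤ ∑ _ε : Fin m → Bool, (‖x0‖ + ∑ j, ‖y j‖) ^ 2 := by
        refine Finset.sum_le_sum fun ε _ => ?_
        have := njTerm_le x0 y ε
        have h0 : (0:ℝ) ≤ ‖x0 + ∑ j, (if ε j then (1 : ℝ) else -1) • y j‖ := norm_nonneg _
        nlinarith
    _ = 2 ^ m * (‖x0‖ + ∑ j, ‖y j‖) ^ 2 := by
        rw [Finset.sum_const, card_univ]
        simp [Fintype.card_fun, mul_comm]

lemma njRatio_le (x0 : X) (y : Fin m → X) (hS : 0 < ‖x0‖ ^ 2 + ∑ j, ‖y j‖ ^ 2) :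
    njRatio x0 y ≤ (m : ℝ) + 1 := by
  rw [njRatio, div_le_iff₀ (by positivity)]
  calc (∑ ε : Fin m → Bool, ‖x0 + ∑ j, (if ε j then (1 : ℝ) else -1) • y j‖ ^ 2)
      ≤ 2 ^ m * (‖x0‖ + ∑ j, ‖y j‖) ^ 2 := sum_sq_le x0 y
    _ ≤ 2 ^ m * (((m : ℝ) + 1) * (‖x0‖ ^ 2 + ∑ j, ‖y j‖ ^ 2)) := by
        gcongr; exact cs_ineq x0 y
    _ = ((m : ℝ) + 1) * (2 ^ m * (‖x0‖ ^ 2 + ∑ j, ‖y j‖ ^ 2)) := by ring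

lemma njRatio_smul (x0 : X) (y : Fin m → X) {t : ℝ} (ht : t ≠ 0) :
    njRatio (t • x0) (fun j => t • y j) = njRatio x0 y := by
  have key : ∀ ε : Fin m → Bool,
      t • x0 + ∑ j, (if ε j then (1 : ℝ) else -1) • t • y j
        = t • (x0 + ∑ j, (if ε j then (1 : ℝ) else -1) • y j) := by
    intro ε
    rw [smul_add, Finset.smul_sum]
    congr 1
    exact Finset.sum_congr rfl fun j _ => (smul_comm _ _ _)
  rw [njRatio, njRatio]
  simp only [key, norm_smul, Real.norm_eq_abs, mul_pow, sq_abs, ← Finset.mul_sum]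
  rw [show (2:ℝ) ^ m * (t ^ 2 * ‖x0‖ ^ 2 + t ^ 2 * ∑ j, ‖y j‖ ^ 2)
      = t ^ 2 * (2 ^ m * (‖x0‖ ^ 2 + ∑ j, ‖y j‖ ^ 2)) by ring,
    mul_div_mul_left _ _ (pow_ne_zero 2 ht)]

lemma sq_lower {a b D M : ℝ} (hab : b - D ≤ a) (hbM : b ≤ M) (hb0 : 0 ≤ b)
    (ha0 : 0 ≤ a) (hD0 : 0 ≤ D) (hM1 : 1 ≤ M) : b ^ 2 - 2 * M * D ≤ a ^ 2 := by
  rcases le_or_gt b D with h | h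
  · nlinarith [mul_le_mul h hbM hb0 hD0, mul_nonneg (by linarith : (0:ℝ) ≤ M) hD0, sq_nonneg a]
  · have h2 : (b - D) ^ 2 ≤ a ^ 2 := by nlinarith
    nlinarith [mul_le_mul_of_nonneg_right hbM hD0]

lemma key_step (x0 : X) (y : Fin m → X) (ε : ℝ) (hε0 : 0 < ε) (hε1 : ε < 1/2)
    (hS : ‖x0‖ ^ 2 + ∑ j, ‖y j‖ ^ 2 = (m : ℝ) + 1)
    (hc : (m : ℝ) + 1 - ε ≤ njRatio x0 y) :
    ∃ (u0 : X) (v : Fin m → X), ‖u0‖ = 1 ∧ (∀ j, ‖v j‖ = 1) ∧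
      (m : ℝ) + 1 - ε - 2 * ((m : ℝ) + 1) * Real.sqrt (2 * ε) ≤ njRatio u0 v := by
  set M : ℝ := (m : ℝ) + 1 with hM
  have hM1 : (1:ℝ) ≤ M := by rw [hM]; linarith [Nat.cast_nonneg (α := ℝ) m]
  set T : ℝ := ‖x0‖ + ∑ j, ‖y j‖ with hT
  set N : ℝ := ∑ ε : Fin m → Bool, ‖x0 + ∑ j, (if ε j then (1 : ℝ) else -1) • y j‖ ^ 2 with hN
  have hT0 : 0 ≤ T := by positivity
  have hTM : T ≤ M := by
    have h1 : T ^ 2 ≤ M * M := by have := cs_ineq x0 y; rw [hS] at this; exact this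
    nlinarith
  have hdenom : (0:ℝ) < 2 ^ m * M := by positivity
  have hNge : (M - ε) * (2 ^ m * M) ≤ N := by
    have : njRatio x0 y = N / (2 ^ m * M) := by rw [njRatio, hS]
    rw [this, le_div_iff₀ hdenom] at hc
    exact hc
  have hTge : M - ε ≤ T := by
    have h1 : N ≤ 2 ^ m * T ^ 2 := sum_sq_le x0 y
    have h2 : (M - ε) * M ≤ T ^ 2 := by
      have h2m : (0:ℝ) < 2 ^ m := by positivity
      nlinarith
    nlinarith
  -- sum of squared deviations
  have hQ : (‖x0‖ - 1) ^ 2 + ∑ j, (‖y j‖ - 1) ^ 2 ≤ 2 * ε := by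
    have expand : ∑ j, (‖y j‖ - 1) ^ 2 = (∑ j, ‖y j‖ ^ 2) - 2 * (∑ j, ‖y j‖) + m := by
      rw [Finset.sum_congr rfl (fun j _ => by ring :
          ∀ j ∈ univ, (‖y j‖ - 1) ^ 2 = ‖y j‖ ^ 2 - 2 * ‖y j‖ + 1),
        Finset.sum_add_distrib, Finset.sum_sub_distrib, ← Finset.mul_sum,
        Finset.sum_const, card_univ, Fintype.card_fin, nsmul_eq_mul, mul_one]
    nlinarith [hS, hTge]
  have hsq0 : (‖x0‖ - 1) ^ 2 ≤ 2 * ε := by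
    have : (0:ℝ) ≤ ∑ j, (‖y j‖ - 1) ^ 2 := Finset.sum_nonneg fun j _ => sq_nonneg _
    linarith
  have hsqj : ∀ j, (‖y j‖ - 1) ^ 2 ≤ 2 * ε := by
    intro j
    have h1 : (‖y j‖ - 1) ^ 2 ≤ ∑ i, (‖y i‖ - 1) ^ 2 :=
      Finset.single_le_sum (f := fun i => (‖y i‖ - 1) ^ 2) (fun i _ => sq_nonneg _) (mem_univ j)
    nlinarith [sq_nonneg (‖x0‖ - 1)]
  have sqrt2e_lt1 : Real.sqrt (2 * ε) < 1 := by
    rw [show (1:ℝ) = Real.sqrt 1 by simp]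
    exact Real.sqrt_lt_sqrt (by linarith) (by linarith)
  have habs : ∀ s : ℝ, (s - 1) ^ 2 ≤ 2 * ε → |s - 1| ≤ Real.sqrt (2 * ε) := by
    intro s h
    rw [← Real.sqrt_sq_eq_abs]
    exact Real.sqrt_le_sqrt h
  have habs0 := habs _ hsq0
  have habsj : ∀ j, |‖y j‖ - 1| ≤ Real.sqrt (2 * ε) := fun j => habs _ (hsqj j)
  have hx0pos : 0 < ‖x0‖ := by
    have := abs_le.mp habs0
    linarith [this.1]
  have hyjpos : ∀ j, 0 < ‖y j‖ := by
    intro j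
    have := abs_le.mp (habsj j)
    linarith [this.1]
  -- normalized vectors
  set u0 : X := ‖x0‖⁻¹ • x0 with hu0
  set v : Fin m → X := fun j => ‖y j‖⁻¹ • y j with hv
  have hu0n : ‖u0‖ = 1 := by
    rw [hu0, norm_smul, Real.norm_eq_abs, abs_inv, abs_of_pos hx0pos,
      inv_mul_cancel₀ hx0pos.ne']
  have hvn : ∀ j, ‖v j‖ = 1 := by
    intro j
    rw [hv]
    simp only
    rw [norm_smul, Real.norm_eq_abs, abs_inv, abs_of_pos (hyjpos j),
      inv_mul_cancel₀ (hyjpos j).ne']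
  set D : ℝ := |‖x0‖ - 1| + ∑ j, |‖y j‖ - 1| with hD
  have hD0 : 0 ≤ D := by positivity
  have hDle : D ≤ M * Real.sqrt (2 * ε) := by
    have h1 : ∑ j, |‖y j‖ - 1| ≤ ∑ _j : Fin m, Real.sqrt (2 * ε) :=
      Finset.sum_le_sum fun j _ => habsj j
    rw [Finset.sum_const, card_univ, Fintype.card_fin, nsmul_eq_mul] at h1
    have h2 : (0:ℝ) ≤ Real.sqrt (2 * ε) := Real.sqrt_nonneg _
    rw [hD, hM]
    nlinarith
  -- norm of normalization error
  have hsub : ∀ (x : X), 0 < ‖x‖ → ‖‖x‖⁻¹ • x - x‖ = |‖x‖ - 1| := by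
    intro x hx
    rw [show ‖x‖⁻¹ • x - x = (‖x‖⁻¹ - 1) • x by rw [sub_smul, one_smul],
      norm_smul, Real.norm_eq_abs,
      show |‖x‖⁻¹ - 1| * ‖x‖ = |(‖x‖⁻¹ - 1) * ‖x‖| by rw [abs_mul, abs_of_pos hx],
      sub_mul, inv_mul_cancel₀ hx.ne', one_mul, abs_sub_comm]
  -- per sign-vector estimate
  have key2 : ∀ θ : Fin m → Bool,
      ‖x0 + ∑ j, (if θ j then (1:ℝ) else -1) • y j‖ ^ 2 - 2 * M * D
        ≤ ‖u0 + ∑ j, (if θ j then (1:ℝ) else -1) • v j‖ ^ 2 := by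
    intro θ
    set b : ℝ := ‖x0 + ∑ j, (if θ j then (1:ℝ) else -1) • y j‖ with hb
    set a : ℝ := ‖u0 + ∑ j, (if θ j then (1:ℝ) else -1) • v j‖ with ha
    have hdiffeq : (u0 + ∑ j, (if θ j then (1:ℝ) else -1) • v j)
        - (x0 + ∑ j, (if θ j then (1:ℝ) else -1) • y j)
        = (u0 - x0) + ∑ j, (if θ j then (1:ℝ) else -1) • (v j - y j) := by
      simp only [smul_sub, Finset.sum_sub_distrib]
      abel
    have hdiff : ‖(u0 + ∑ j, (if θ j then (1:ℝ) else -1) • v j)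
        - (x0 + ∑ j, (if θ j then (1:ℝ) else -1) • y j)‖ ≤ D := by
      rw [hdiffeq]
      refine (norm_add_le _ _).trans ?_
      rw [hD]
      gcongr
      · rw [hu0, hsub x0 hx0pos]
      · refine (norm_sum_le _ _).trans ?_
        refine Finset.sum_le_sum fun j _ => ?_
        rw [norm_smul]
        have h1 : ‖(if θ j then (1:ℝ) else -1)‖ = 1 := by split <;> simp
        rw [h1, one_mul, hv]
        simp only
        rw [hsub (y j) (hyjpos j)]
    have hab : b - D ≤ a := by
      have h1 := norm_sub_norm_le (x0 + ∑ j, (if θ j then (1:ℝ) else -1) • y j)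
        (u0 + ∑ j, (if θ j then (1:ℝ) else -1) • v j)
      rw [norm_sub_rev] at h1
      linarith
    have hbM : b ≤ M := (njTerm_le x0 y θ).trans hTM
    have hb0 : 0 ≤ b := norm_nonneg _
    have ha0 : 0 ≤ a := norm_nonneg _
    exact sq_lower hab hbM hb0 ha0 hD0 hM1
  refine ⟨u0, v, hu0n, hvn, ?_⟩
  have hSu : ‖u0‖ ^ 2 + ∑ j, ‖v j‖ ^ 2 = M := by
    rw [hu0n]
    simp only [hvn, one_pow]
    rw [Finset.sum_const, card_univ, Fintype.card_fin, nsmul_eq_mul, mul_one, hM]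
    ring
  set q : ℝ := Real.sqrt (2 * ε) with hq
  rw [njRatio, hSu, le_div_iff₀ hdenom]
  have hsum : N - 2 ^ m * (2 * M * D)
      ≤ ∑ θ : Fin m → Bool, ‖u0 + ∑ j, (if θ j then (1:ℝ) else -1) • v j‖ ^ 2 := by
    have h1 : ∑ θ : Fin m → Bool,
        (‖x0 + ∑ j, (if θ j then (1:ℝ) else -1) • y j‖ ^ 2 - 2 * M * D)
        ≤ ∑ θ : Fin m → Bool, ‖u0 + ∑ j, (if θ j then (1:ℝ) else -1) • v j‖ ^ 2 :=
      Finset.sum_le_sum fun θ _ => key2 θ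
    rw [Finset.sum_sub_distrib, Finset.sum_const, card_univ, Fintype.card_fun,
      Fintype.card_bool, Fintype.card_fin, nsmul_eq_mul] at h1
    push_cast at h1
    linarith
  have h2m : (0:ℝ) < 2 ^ m := by positivity
  have hDle2 : (2:ℝ) ^ m * (2 * M * D) ≤ 2 ^ m * (2 * M * (M * q)) :=
    mul_le_mul_of_nonneg_left
      (mul_le_mul_of_nonneg_left hDle (by linarith : (0:ℝ) ≤ 2 * M)) (le_of_lt h2m)
  have hring : (M - ε - 2 * M * q) * (2 ^ m * M)
      = (M - ε) * (2 ^ m * M) - (2:ℝ) ^ m * (2 * M * (M * q)) := by ring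
  rw [hring]
  linarith

end Helpers

theorem stmt_16 (X : Type*) [NormedAddCommGroup X] [NormedSpace ℝ X] [CompleteSpace X]
    [Nontrivial X] (n : ℕ) (hn : 2 ≤ n) :
    (upperMNJ X n = n ↔ upperNJ X n = n) ∧ (upperMNJ X n < n ↔ upperNJ X n < n) := by
  obtain ⟨e, he⟩ : ∃ e : X, ‖e‖ = 1 := by
    obtain ⟨x, hx⟩ := exists_ne (0 : X)
    have hxp : 0 < ‖x‖ := norm_pos_iff.mpr hx
    exact ⟨‖x‖⁻¹ • x, by
      rw [norm_smul, Real.norm_eq_abs, abs_inv, abs_of_pos hxp, inv_mul_cancel₀ hxp.ne']⟩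
  have hmn : ((n : ℕ) : ℝ) = ((n - 1 : ℕ) : ℝ) + 1 := by
    have h1 : (n - 1) + 1 = n := by omega
    rw [← h1]; push_cast; ring
  have hsubset : {c : ℝ | ∃ (x0 : X) (y : Fin (n - 1) → X),
        ‖x0‖ = 1 ∧ (∀ j, ‖y j‖ = 1) ∧ c = njRatio x0 y}
      ⊆ {c : ℝ | ∃ (x0 : X) (y : Fin (n - 1) → X),
        0 < ‖x0‖ ^ 2 + ∑ j, ‖y j‖ ^ 2 ∧ c = njRatio x0 y} := by
    rintro c ⟨x0, y, h1, h2, h3⟩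
    refine ⟨x0, y, ?_, h3⟩
    rw [h1]
    positivity
  have hub : ∀ c ∈ {c : ℝ | ∃ (x0 : X) (y : Fin (n - 1) → X),
      0 < ‖x0‖ ^ 2 + ∑ j, ‖y j‖ ^ 2 ∧ c = njRatio x0 y}, c ≤ (n : ℝ) := by
    rintro c ⟨x0, y, h1, rfl⟩
    rw [hmn]
    exact njRatio_le x0 y h1
  have hne_m : {c : ℝ | ∃ (x0 : X) (y : Fin (n - 1) → X),
      ‖x0‖ = 1 ∧ (∀ j, ‖y j‖ = 1) ∧ c = njRatio x0 y}.Nonempty :=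
    ⟨njRatio e (fun _ : Fin (n - 1) => e), e, fun _ => e, he, fun _ => he, rfl⟩
  have hne_NJ := hne_m.mono hsubset
  have hbddNJ : BddAbove {c : ℝ | ∃ (x0 : X) (y : Fin (n - 1) → X),
      0 < ‖x0‖ ^ 2 + ∑ j, ‖y j‖ ^ 2 ∧ c = njRatio x0 y} := ⟨(n : ℝ), hub⟩
  have hbddM : BddAbove {c : ℝ | ∃ (x0 : X) (y : Fin (n - 1) → X),
      ‖x0‖ = 1 ∧ (∀ j, ‖y j‖ = 1) ∧ c = njRatio x0 y} :=
    ⟨(n : ℝ), fun c hc => hub c (hsubset hc)⟩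
  have hA_le : upperMNJ X n ≤ (n : ℝ) :=
    Real.sSup_le (fun c hc => hub c (hsubset hc)) (Nat.cast_nonneg n)
  have hB_le : upperNJ X n ≤ (n : ℝ) := Real.sSup_le hub (Nat.cast_nonneg n)
  have hAB : upperMNJ X n ≤ upperNJ X n := csSup_le_csSup hbddNJ hne_m hsubset
  have hard : upperNJ X n = (n : ℝ) → (n : ℝ) ≤ upperMNJ X n := by
    intro hB
    refine le_of_forall_pos_le_add ?_
    intro δ hδ
    set M : ℝ := ((n - 1 : ℕ) : ℝ) + 1 with hM
    have hM1 : (1 : ℝ) ≤ M := by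
      rw [hM]; linarith [Nat.cast_nonneg (α := ℝ) (n - 1)]
    set ε : ℝ := min (1/4) (δ ^ 2 / (2 * (2 * M + 1) ^ 2)) with hε
    have hε0 : 0 < ε := lt_min (by norm_num) (by positivity)
    have hε1 : ε < 1/2 := lt_of_le_of_lt (min_le_left _ _) (by norm_num)
    have hq1 : Real.sqrt (2 * ε) ≤ δ / (2 * M + 1) := by
      have h2 : 2 * ε ≤ (δ / (2 * M + 1)) ^ 2 := by
        have h3 : ε ≤ δ ^ 2 / (2 * (2 * M + 1) ^ 2) := min_le_right _ _
        have key : 2 * (δ ^ 2 / (2 * (2 * M + 1) ^ 2)) = (δ / (2 * M + 1)) ^ 2 := by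
          rw [div_pow]
          field_simp
        rw [← key]
        linarith
      calc Real.sqrt (2 * ε) ≤ Real.sqrt ((δ / (2 * M + 1)) ^ 2) := Real.sqrt_le_sqrt h2
        _ = δ / (2 * M + 1) := Real.sqrt_sq (by positivity)
    have hεq : ε ≤ Real.sqrt (2 * ε) := by
      calc ε = Real.sqrt (ε ^ 2) := (Real.sqrt_sq hε0.le).symm
        _ ≤ Real.sqrt (2 * ε) := Real.sqrt_le_sqrt (by nlinarith)
    rw [upperNJ] at hB
    obtain ⟨c, hcmem, hclt⟩ := exists_lt_of_lt_csSup hne_NJ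
      (show (n : ℝ) - ε < sSup _ from by rw [hB]; linarith)
    obtain ⟨x0, y, hS, rfl⟩ := hcmem
    set S : ℝ := ‖x0‖ ^ 2 + ∑ j, ‖y j‖ ^ 2 with hSdef
    set t : ℝ := Real.sqrt (M / S) with ht
    have htpos : 0 < t := Real.sqrt_pos.mpr (by positivity)
    have ht2 : t ^ 2 = M / S := Real.sq_sqrt (by positivity)
    have hS' : ‖t • x0‖ ^ 2 + ∑ j, ‖t • y j‖ ^ 2 = M := by
      simp only [norm_smul, Real.norm_eq_abs, mul_pow, sq_abs, ← Finset.mul_sum]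
      rw [← mul_add, ht2, ← hSdef, div_mul_cancel₀ _ (ne_of_gt hS)]
    have hc' : M - ε ≤ njRatio (t • x0) (fun j => t • y j) := by
      rw [njRatio_smul x0 y htpos.ne']
      rw [hmn] at hclt
      linarith
    obtain ⟨u0, v, hu, hv, hbound⟩ := key_step (t • x0) (fun j => t • y j) ε hε0 hε1 hS' hc'
    have hmem : njRatio u0 v ∈ {c : ℝ | ∃ (x0 : X) (y : Fin (n - 1) → X),
        ‖x0‖ = 1 ∧ (∀ j, ‖y j‖ = 1) ∧ c = njRatio x0 y} := ⟨u0, v, hu, hv, rfl⟩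
    have hle : njRatio u0 v ≤ upperMNJ X n := by
      rw [upperMNJ]
      exact le_csSup hbddM hmem
    have hmul : (2 * M + 1) * (δ / (2 * M + 1)) = δ :=
      mul_div_cancel₀ δ (by positivity)
    have hq2 : (2 * M + 1) * Real.sqrt (2 * ε) ≤ (2 * M + 1) * (δ / (2 * M + 1)) :=
      mul_le_mul_of_nonneg_left hq1 (by positivity)
    rw [hmn]
    linarith
  have hardeq : upperNJ X n = (n : ℝ) → upperMNJ X n = (n : ℝ) :=
    fun h => le_antisymm hA_le (hard h)
  constructor
  · constructor
    · intro h
      exact le_antisymm hB_le (h ▸ hAB)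
    · exact hardeq
  · constructor
    · intro h
      rcases lt_or_eq_of_le hB_le with h2 | h2
      · exact h2
      · exact absurd (hardeq h2) (ne_of_lt h)
    · intro h
      exact lt_of_le_of_lt hAB h
end
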